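/- Theorem 2 (Motion coordination on surfaces). Assume the communication graph G is undirected and connected and all first and second partial derivatives ∂_{w1}f^i_j, ∂_{w2}f^i_j, ∂²_{w1w1}f^i_j, ∂²_{w1w2}f^i_j, ∂²_{w2w1}f^i_j, ∂²_{w2w2}f^i_j are bounded on ℝ². Given desired parametric speeds ẇ₁*, ẇ₂* ∈ ℝ, choose the extra-vector constants v_{n+1} = (−1)^{n+1} ẇ₂* and v_{n+2} = (−1)^n ẇ₁*. Let ξ : [0,∞) → ℝ^{(n+2)N} be any solution of the coupled autonomous system ξ̇^i(t) = χ^i(ξ^i(t), w₁(t), w₂(t)) for all i, where w₁(t), w₂(t) ∈ ℝ^N collect the (n+1)-th and (n+2)-th components of the ξ^i(t). Then for every initial condition: (1) ‖Φ^i(ξ^i(t))‖ → 0 as t → ∞ for every i; (2) Dᵀ(w₁(t) − w₁*) → 0 and Dᵀ(w₂(t) − w₂*) → 0 as t → ∞, so w^i_1(t) − w^j_1(t) → (w₁*)_i − (w₁*)_j and w^i_2(t) − w^j_2(t) → (w₂*)_i − (w₂*)_j for every edge (i,j); and (3) ẇ^i_1(t) → ẇ₁* and ẇ^i_2(t) →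 ẇ₂* as t → ∞ for every i. -/

import Mathlib

open Filter Topology Matrix

/-- first partial derivative of `g : ℝ → ℝ → ℝ` with respect to the first argument -/
noncomputable def pw1 (g : ℝ → ℝ → ℝ) (a b : ℝ) : ℝ := deriv (fun s => g s b) a

/-- first partial derivative of `g : ℝ → ℝ → ℝ` with respect to the second argument -/
noncomputable def pw2 (g : ℝ → ℝ → ℝ) (a b : ℝ) : ℝ := deriv (fun s => g a s) b

section AuxMCS

lemma MCS.ker_le_bound {E F G : Type*} [NormedAddCommGroup E] [NormedSpace ℝ E]
    [NormedAddCommGroup F] [NormedSpace ℝ F] [NormedAddCommGroup G] [NormedSpace ℝ G]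
    [FiniteDimensional ℝ F]
    (A : E →ₗ[ℝ] F) (B : E →ₗ[ℝ] G) (h : LinearMap.ker A ≤ LinearMap.ker B) :
    ∃ C : ℝ, 0 ≤ C ∧ ∀ v, ‖B v‖ ≤ C * ‖A v‖ := by
  let Nq : (E ⧸ LinearMap.ker A) →ₗ[ℝ] G := (LinearMap.ker A).liftQ B h
  let f : LinearMap.range A →ₗ[ℝ] G := Nq ∘ₗ (A.quotKerEquivRange.symm : _ →ₗ[ℝ] _)
  obtain ⟨M, hM⟩ := f.exists_extend
  let M' := LinearMap.toContinuousLinearMap M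
  refine ⟨‖M'‖, norm_nonneg _, fun v => ?_⟩
  have h1 : M (A v) = B v := by
    have h2 : (⟨A v, LinearMap.mem_range_self A v⟩ : LinearMap.range A) =
        A.quotKerEquivRange (Submodule.Quotient.mk v) := by
      ext; simp [LinearMap.quotKerEquivRange_apply_mk]
    calc M (A v) = f ⟨A v, LinearMap.mem_range_self A v⟩ := by
          rw [← hM]; rfl
      _ = Nq (Submodule.Quotient.mk v) := by rw [h2]; simp [f]
      _ = B v := Submodule.liftQ_apply _ _ _
  calc ‖B v‖ = ‖M' (A v)‖ := by rw [← h1]; rfl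
    _ ≤ ‖M'‖ * ‖A v‖ := M'.le_opNorm _

lemma MCS.barbalat (V g : ℝ → ℝ) (K : ℝ) (hK : 0 < K)
    (hd : ∀ t, 0 ≤ t → HasDerivAt V (-(g t)) t)
    (hg0 : ∀ t, 0 ≤ t → 0 ≤ g t)
    (hV0 : ∀ t, 0 ≤ t → 0 ≤ V t)
    (hlip : ∀ s t, 0 ≤ s → 0 ≤ t → |g t - g s| ≤ K * |t - s|) :
    Tendsto g atTop (nhds 0) := by
  have hA : AntitoneOn V (Set.Ici (0:ℝ)) := by
    apply antitoneOn_of_deriv_nonpos (convex_Ici 0)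
    · exact fun t ht => (hd t ht).continuousAt.continuousWithinAt
    · intro t ht
      rw [interior_Ici] at ht
      exact (hd t ht.le).differentiableAt.differentiableWithinAt
    · intro t ht
      rw [interior_Ici] at ht
      rw [(hd t ht.le).deriv]
      exact neg_nonpos.2 (hg0 t ht.le)
  have hVlim : ∃ L, Tendsto V atTop (nhds L) := by
    set V' : ℝ → ℝ := fun t => V (max t 0) with hV'
    have hA' : Antitone V' := fun s t hst =>
      hA (Set.mem_Ici.2 (le_max_right s 0)) (Set.mem_Ici.2 (le_max_right t 0))
        (max_le_max hst le_rfl)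
    have hb : BddBelow (Set.range V') :=
      ⟨0, fun y ⟨t, ht⟩ => ht ▸ hV0 _ (le_max_right t 0)⟩
    refine ⟨⨅ t, V' t, Tendsto.congr' ?_ (tendsto_atTop_ciInf hA' hb)⟩
    filter_upwards [eventually_ge_atTop (0:ℝ)] with t ht
    simp [hV', max_eq_left ht]
  obtain ⟨L, hL⟩ := hVlim
  rw [Metric.tendsto_atTop]
  by_contra hcon
  push_neg at hcon
  obtain ⟨ε, hε, hfreq⟩ := hcon
  set r : ℝ := ε / (2 * K) with hr
  have hrpos : 0 < r := div_pos hε (by linarith)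
  set δ : ℝ := ε / 2 * r with hδ
  have hδpos : 0 < δ := by positivity
  obtain ⟨T₀, hT₀⟩ := (Metric.tendsto_atTop.1 hL) (δ/2) (by positivity)
  obtain ⟨t, ht, hgt⟩ := hfreq (max T₀ 0)
  have ht0 : (0:ℝ) ≤ t := le_trans (le_max_right T₀ 0) ht
  have htT : T₀ ≤ t := le_trans (le_max_left T₀ 0) ht
  have hgtε : ε ≤ g t := by
    have : dist (g t) 0 = g t := by
      rw [Real.dist_eq, sub_zero, abs_of_nonneg (hg0 t ht0)]
    linarith [hgt, this.symm.le]
  have hglower : ∀ s ∈ Set.Icc t (t + r), ε / 2 ≤ g s := by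
    intro s hs
    have hs0 : 0 ≤ s := le_trans ht0 hs.1
    have h1 : |g s - g t| ≤ K * |s - t| := hlip t s ht0 hs0
    have h2 : |s - t| ≤ r := by
      rw [abs_of_nonneg (by linarith [hs.1])]
      linarith [hs.2]
    have h3 : K * |s - t| ≤ K * r := by nlinarith
    have h4 : K * r = ε / 2 := by
      rw [hr]; field_simp
    have := abs_le.1 (h1.trans (h3.trans_eq h4))
    linarith
  have hdec : V (t + r) + ε / 2 * (t + r) ≤ V t + ε / 2 * t := by
    have hA2 : AntitoneOn (fun s => V s + ε / 2 * s) (Set.Icc t (t + r)) := by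
      apply antitoneOn_of_deriv_nonpos (convex_Icc _ _)
      · intro s hs
        exact (((hd s (ht0.trans hs.1)).add
          ((hasDerivAt_id s).const_mul (ε/2))).continuousAt).continuousWithinAt
      · intro s hs
        rw [interior_Icc] at hs
        exact ((hd s (ht0.trans hs.1.le)).add
          ((hasDerivAt_id s).const_mul (ε/2))).differentiableAt.differentiableWithinAt
      · intro s hs
        rw [interior_Icc] at hs
        have hds : HasDerivAt (fun s => V s + ε / 2 * s) (-g s + ε/2) s := by
          have h := (hd s (ht0.trans hs.1.le)).add ((hasDerivAt_id s).const_mul (ε/2))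
          simp only [mul_one] at h
          exact h
        rw [hds.deriv]
        have := hglower s ⟨hs.1.le, hs.2.le⟩
        linarith
    have := hA2 (Set.left_mem_Icc.2 (by linarith)) (Set.right_mem_Icc.2 (by linarith))
      (by linarith)
    simpa using this
  have hgap : δ ≤ V t - V (t + r) := by
    have : ε / 2 * (t + r) - ε / 2 * t = δ := by rw [hδ]; ring
    linarith
  have h5 := hT₀ t htT
  have h6 := hT₀ (t + r) (by linarith)
  rw [Real.dist_eq] at h5 h6
  obtain ⟨a1, a2⟩ := abs_lt.1 h5
  obtain ⟨b1, b2⟩ := abs_lt.1 h6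
  linarith

lemma MCS.pw1_eq_fderiv (g : ℝ → ℝ → ℝ) (hg : Differentiable ℝ (fun p : ℝ × ℝ => g p.1 p.2))
    (p q : ℝ) : pw1 g p q = fderiv ℝ (fun p : ℝ × ℝ => g p.1 p.2) (p, q) (1, 0) := by
  have h1 : HasDerivAt (fun s => g s q)
      (fderiv ℝ (fun p : ℝ × ℝ => g p.1 p.2) (p, q) (1, 0)) p :=
    by have := (hg (p, q)).hasFDerivAt.comp_hasDerivAt p
        ((hasDerivAt_id p).prodMk (hasDerivAt_const p q)); exact this
  exact h1.deriv

lemma MCS.pw2_eq_fderiv (g : ℝ → ℝ → ℝ) (hg : Differentiable ℝ (fun p : ℝ × ℝ => g p.1 p.2))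
    (p q : ℝ) : pw2 g p q = fderiv ℝ (fun p : ℝ × ℝ => g p.1 p.2) (p, q) (0, 1) := by
  have h1 : HasDerivAt (fun s => g p s)
      (fderiv ℝ (fun p : ℝ × ℝ => g p.1 p.2) (p, q) (0, 1)) q :=
    by have := (hg (p, q)).hasFDerivAt.comp_hasDerivAt q
        ((hasDerivAt_const q p).prodMk (hasDerivAt_id q)); exact this
  exact h1.deriv

lemma MCS.hasDerivAt_pw (g : ℝ → ℝ → ℝ) (hg : Differentiable ℝ (fun p : ℝ × ℝ => g p.1 p.2))
    {a b : ℝ → ℝ} {a' b' : ℝ} {t : ℝ} (ha : HasDerivAt a a' t) (hb : HasDerivAt b b' t) :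
    HasDerivAt (fun s => g (a s) (b s))
      (pw1 g (a t) (b t) * a' + pw2 g (a t) (b t) * b') t := by
  have h0 : HasDerivAt (fun s => g (a s) (b s))
      (fderiv ℝ (fun p : ℝ × ℝ => g p.1 p.2) (a t, b t) (a', b')) t :=
    by have := (hg (a t, b t)).hasFDerivAt.comp_hasDerivAt t (ha.prodMk hb); exact this
  have h1 : ((a', b') : ℝ × ℝ) = a' • ((1:ℝ), (0:ℝ)) + b' • ((0:ℝ), (1:ℝ)) := by
    simp [Prod.ext_iff]
  convert h0 using 1
  rw [h1, map_add, _root_.map_smul, _root_.map_smul, MCS.pw1_eq_fderiv g hg, MCS.pw2_eq_fderiv g hg]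
  simp [mul_comm]

lemma MCS.differentiable_pw1 (g : ℝ → ℝ → ℝ)
    (hg : ContDiff ℝ 2 (fun p : ℝ × ℝ => g p.1 p.2)) :
    Differentiable ℝ (fun p : ℝ × ℝ => pw1 g p.1 p.2) := by
  have h1 : ContDiff ℝ 1 (fun p : ℝ × ℝ =>
      fderiv ℝ (fun p : ℝ × ℝ => g p.1 p.2) p (1, 0)) :=
    (hg.fderiv_right (by norm_num)).clm_apply contDiff_const
  have h2 : (fun p : ℝ × ℝ => pw1 g p.1 p.2) = fun p : ℝ × ℝ =>
      fderiv ℝ (fun p : ℝ × ℝ => g p.1 p.2) p (1, 0) := by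
    funext p
    exact MCS.pw1_eq_fderiv g (hg.differentiable (by norm_num)) p.1 p.2
  rw [h2]
  exact h1.differentiable (by norm_num)

lemma MCS.differentiable_pw2 (g : ℝ → ℝ → ℝ)
    (hg : ContDiff ℝ 2 (fun p : ℝ × ℝ => g p.1 p.2)) :
    Differentiable ℝ (fun p : ℝ × ℝ => pw2 g p.1 p.2) := by
  have h1 : ContDiff ℝ 1 (fun p : ℝ × ℝ =>
      fderiv ℝ (fun p : ℝ × ℝ => g p.1 p.2) p (0, 1)) :=
    (hg.fderiv_right (by norm_num)).clm_apply contDiff_const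
  have h2 : (fun p : ℝ × ℝ => pw2 g p.1 p.2) = fun p : ℝ × ℝ =>
      fderiv ℝ (fun p : ℝ × ℝ => g p.1 p.2) p (0, 1) := by
    funext p
    exact MCS.pw2_eq_fderiv g (hg.differentiable (by norm_num)) p.1 p.2
  rw [h2]
  exact h1.differentiable (by norm_num)

/-- boundedness on `[0, ∞)` -/
def MCS.BddOn (h : ℝ → ℝ) : Prop := ∃ M : ℝ, 0 ≤ M ∧ ∀ t : ℝ, 0 ≤ t → |h t| ≤ M

namespace MCS.BddOn

lemma const (c : ℝ) : MCS.BddOn (fun _ => c) := ⟨|c|, abs_nonneg c, fun _ _ => le_rfl⟩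

lemma of_le {f : ℝ → ℝ} {M : ℝ} (h : ∀ t, 0 ≤ t → |f t| ≤ M) : MCS.BddOn f :=
  ⟨max M 0, le_max_right _ _, fun t ht => (h t ht).trans (le_max_left _ _)⟩

lemma add {f g : ℝ → ℝ} (hf : MCS.BddOn f) (hg : MCS.BddOn g) :
    MCS.BddOn (fun t => f t + g t) := by
  obtain ⟨M, hM, hMb⟩ := hf
  obtain ⟨M', hM', hMb'⟩ := hg
  exact ⟨M + M', by linarith, fun t ht =>
    (abs_add_le _ _).trans (add_le_add (hMb t ht) (hMb' t ht))⟩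

lemma neg {f : ℝ → ℝ} (hf : MCS.BddOn f) : MCS.BddOn (fun t => -f t) := by
  obtain ⟨M, hM, hMb⟩ := hf
  exact ⟨M, hM, fun t ht => (abs_neg (f t)).le.trans (hMb t ht)⟩

lemma sub {f g : ℝ → ℝ} (hf : MCS.BddOn f) (hg : MCS.BddOn g) :
    MCS.BddOn (fun t => f t - g t) := by
  simpa [sub_eq_add_neg] using hf.add hg.neg

lemma mul {f g : ℝ → ℝ} (hf : MCS.BddOn f) (hg : MCS.BddOn g) :
    MCS.BddOn (fun t => f t * g t) := by
  obtain ⟨M, hM, hMb⟩ := hf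
  obtain ⟨M', hM', hMb'⟩ := hg
  refine ⟨M * M', by positivity, fun t ht => ?_⟩
  rw [abs_mul]
  exact mul_le_mul (hMb t ht) (hMb' t ht) (abs_nonneg _) hM

lemma const_mul {f : ℝ → ℝ} (c : ℝ) (hf : MCS.BddOn f) : MCS.BddOn (fun t => c * f t) :=
  (const c).mul hf

lemma sum {ι : Type*} (s : Finset ι) (f : ι → ℝ → ℝ) (h : ∀ i ∈ s, MCS.BddOn (f i)) :
    MCS.BddOn (fun t => ∑ i ∈ s, f i t) := by
  classical
  induction s using Finset.induction_on with
  | empty => simpa using const 0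
  | insert _ _ hx ih =>
    rename_i a s'
    simp only [Finset.sum_insert hx]
    exact (h a (Finset.mem_insert_self a s')).add
      (ih fun i hi => h i (Finset.mem_insert_of_mem hi))

end MCS.BddOn

lemma MCS.tendsto_zero_of_sq (g : ℝ → ℝ)
    (h : Tendsto (fun t => g t * g t) atTop (nhds 0)) : Tendsto g atTop (nhds 0) := by
  have h1 : Tendsto (fun t => Real.sqrt (g t * g t)) atTop (nhds 0) := by
    have := (Real.continuous_sqrt.tendsto' 0 0 Real.sqrt_zero).comp h
    exact this
  refine squeeze_zero_norm (fun t => ?_) h1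
  rw [Real.norm_eq_abs, ← Real.sqrt_mul_self_eq_abs]

end AuxMCS


set_option maxHeartbeats 2000000 in
/-- **Theorem 2 (Motion coordination on surfaces).**
Robot `i` has generalized coordinate `ξ^i = (x^i, w^i_1, w^i_2) ∈ ℝ^{n+2}`,
surface errors `φ^i_j = x^i_j - f^i_j(w^i_1, w^i_2)`, and follows the coordinating
guiding vector field built from the surface-navigation field with extra vector
constants `v_{n+1} = (-1)^{n+1} ẇ₂*`, `v_{n+2} = (-1)^n ẇ₁*`, and consensus terms
`c₁ = -L(w₁ - w₁*)`, `c₂ = -L(w₂ - w₂*)`.  Under connectivity and boundedness of the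
first and second partial derivatives, the surface-convergence errors vanish, the
parametric differences converge to the desired ones, and the parametric speeds
converge to the desired speeds. -/
theorem motion_coordination_on_surfaces
    (n N : ℕ) (hn : 1 ≤ n) (hN : 1 ≤ N)
    (f : Fin N → Fin n → ℝ → ℝ → ℝ)
    (hf : ∀ i j, ContDiff ℝ 2 (fun p : ℝ × ℝ => f i j p.1 p.2))
    (hbound : ∀ i j, ∃ C : ℝ, ∀ a b : ℝ,
      |pw1 (f i j) a b| ≤ C ∧ |pw2 (f i j) a b| ≤ C ∧
      |pw1 (pw1 (f i j)) a b| ≤ C ∧ |pw2 (pw1 (f i j)) a b| ≤ C ∧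
      |pw1 (pw2 (f i j)) a b| ≤ C ∧ |pw2 (pw2 (f i j)) a b| ≤ C)
    (k : Fin N → Fin n → ℝ) (hk : ∀ i j, 0 < k i j)
    (kc1 kc2 : ℝ) (hkc1 : 0 < kc1) (hkc2 : 0 < kc2)
    (G : SimpleGraph (Fin N)) [DecidableRel G.Adj] (hGconn : G.Connected)
    (E : ℕ) (D : Matrix (Fin N) (Fin E) ℝ)
    (hD : G.lapMatrix ℝ = D * D.transpose)
    (w1star w2star : Fin N → ℝ)
    -- desired parametric speeds and the corresponding extra-vector constants
    (wd1star wd2star : ℝ) (v1 v2 : ℝ)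
    (hv1 : v1 = (-1 : ℝ) ^ (n + 1) * wd2star)
    (hv2 : v2 = (-1 : ℝ) ^ n * wd1star)
    (x : ℝ → Fin N → Fin n → ℝ) (w1 w2 : ℝ → Fin N → ℝ)
    -- the first `n` components of `χ^i`
    (hode_x : ∀ (i : Fin N) (j : Fin n) (t : ℝ), 0 ≤ t →
      HasDerivAt (fun s => x s i j)
        ((-1 : ℝ) ^ n * (v2 * pw1 (f i j) (w1 t i) (w2 t i)
            - v1 * pw2 (f i j) (w1 t i) (w2 t i))
          - k i j * (x t i j - f i j (w1 t i) (w2 t i))) t)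
    -- the `(n+1)`-th component of `χ^i`
    (hode_w1 : ∀ (i : Fin N) (t : ℝ), 0 ≤ t →
      HasDerivAt (fun s => w1 s i)
        ((-1 : ℝ) ^ n * v2
          + (∑ l, k i l * (x t i l - f i l (w1 t i) (w2 t i))
              * pw1 (f i l) (w1 t i) (w2 t i))
          + kc1 * (-(G.lapMatrix ℝ *ᵥ (fun m => w1 t m - w1star m)) i)) t)
    -- the `(n+2)`-th component of `χ^i`
    (hode_w2 : ∀ (i : Fin N) (t : ℝ), 0 ≤ t →
      HasDerivAt (fun s => w2 s i)
        ((-1 : ℝ) ^ (n + 1) * v1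
          + (∑ l, k i l * (x t i l - f i l (w1 t i) (w2 t i))
              * pw2 (f i l) (w1 t i) (w2 t i))
          + kc2 * (-(G.lapMatrix ℝ *ᵥ (fun m => w2 t m - w2star m)) i)) t) :
    -- (1) surface convergence: `‖Φ^i(ξ^i(t))‖ → 0` for every robot `i`
    (∀ i : Fin N,
      Tendsto (fun t => Real.sqrt (∑ j, (x t i j - f i j (w1 t i) (w2 t i)) ^ 2))
        atTop (nhds 0)) ∧
    -- (2) coordination: `Dᵀ(w₁(t) - w₁*) → 0` and `Dᵀ(w₂(t) - w₂*) → 0`,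
    (∀ e : Fin E,
      Tendsto (fun t => (D.transpose *ᵥ (fun m => w1 t m - w1star m)) e)
        atTop (nhds 0)) ∧
    (∀ e : Fin E,
      Tendsto (fun t => (D.transpose *ᵥ (fun m => w2 t m - w2star m)) e)
        atTop (nhds 0)) ∧
    -- so the parametric differences converge for every edge `(i,j)` of `G`
    (∀ i j : Fin N, G.Adj i j →
      Tendsto (fun t => w1 t i - w1 t j) atTop (nhds (w1star i - w1star j))) ∧
    (∀ i j : Fin N, G.Adj i j →
      Tendsto (fun t => w2 t i - w2 t j) atTop (nhds (w2star i - w2star j))) ∧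
    -- (3) surface maneuvering: `ẇ^i_1(t) → ẇ₁*` and `ẇ^i_2(t) → ẇ₂*`
    (∀ i : Fin N,
      Tendsto (fun t =>
        (-1 : ℝ) ^ n * v2
          + (∑ l, k i l * (x t i l - f i l (w1 t i) (w2 t i))
              * pw1 (f i l) (w1 t i) (w2 t i))
          + kc1 * (-(G.lapMatrix ℝ *ᵥ (fun m => w1 t m - w1star m)) i))
        atTop (nhds wd1star)) ∧
    (∀ i : Fin N,
      Tendsto (fun t =>
        (-1 : ℝ) ^ (n + 1) * v1
          + (∑ l, k i l * (x t i l - f i l (w1 t i) (w2 t i))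
              * pw2 (f i l) (w1 t i) (w2 t i))
          + kc2 * (-(G.lapMatrix ℝ *ᵥ (fun m => w2 t m - w2star m)) i))
        atTop (nhds wd2star)) := by
    classical
  set Lm : Matrix (Fin N) (Fin N) ℝ := G.lapMatrix ℝ with hLm
  have hrow : ∀ m : Fin N, ∑ i, Lm m i = 0 := by
    intro m
    have h0 := congrFun (G.lapMatrix_mulVec_const_eq_zero (R := ℝ)) m
    simpa [Matrix.mulVec, dotProduct] using h0
  have hsymm : ∀ i m : Fin N, Lm i m = Lm m i := by
    intro i m
    exact ((G.isSymm_lapMatrix (R := ℝ)).apply i m).symm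
  have hcol : ∀ m : Fin N, ∑ i, Lm i m = 0 := by
    intro m
    rw [Finset.sum_congr rfl (fun i _ => hsymm i m)]
    exact hrow m
  have hquad : ∀ v : Fin N → ℝ, ∑ i, v i * (Lm *ᵥ v) i = ∑ e, ((D.transpose *ᵥ v) e)^2 := by
    intro v
    have h1 : ∑ i, v i * (Lm *ᵥ v) i = v ⬝ᵥ (Lm *ᵥ v) := rfl
    rw [h1, hD, ← Matrix.mulVec_mulVec, Matrix.dotProduct_mulVec,
      ← Matrix.mulVec_transpose]
    simp [dotProduct, sq]
  have hQD : ∀ v : Fin N → ℝ,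
      (∑ i, ∑ m, Lm i m * (v i * v m)) = ∑ e, ((D.transpose *ᵥ v) e)^2 := by
    intro v
    rw [← hquad v]
    refine Finset.sum_congr rfl fun i _ => ?_
    have h2 : (Lm *ᵥ v) i = ∑ m, Lm i m * v m := rfl
    rw [h2, Finset.mul_sum]
    exact Finset.sum_congr rfl fun m _ => by ring
  have hkerD : ∀ v : Fin N → ℝ, Lm *ᵥ v = 0 → D.transpose *ᵥ v = 0 := by
    intro v hv
    have h2 : ∑ e, ((D.transpose *ᵥ v) e)^2 = 0 := by
      rw [← hquad v, hv]; simp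
    funext e
    have h3 := (Finset.sum_eq_zero_iff_of_nonneg
      (fun e _ => sq_nonneg ((D.transpose *ᵥ v) e))).1 h2 e (Finset.mem_univ e)
    exact pow_eq_zero_iff (n := 2) (by norm_num) |>.1 h3
  have hkerConst : ∀ v : Fin N → ℝ, Lm *ᵥ v = 0 → ∀ i j, v i = v j := by
    intro v hv i j
    have h4 : Matrix.toLin' (G.lapMatrix ℝ) v = 0 := by
      simpa [Matrix.toLin'_apply] using hv
    exact (G.lapMatrix_mulVec_eq_zero_iff_forall_reachable).1 hv i j (hGconn i j)
  -- abbreviations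
  set tw1 : ℝ → Fin N → ℝ := fun t m => w1 t m - w1star m with htw1
  set tw2 : ℝ → Fin N → ℝ := fun t m => w2 t m - w2star m with htw2
  set φv : ℝ → Fin N → Fin n → ℝ := fun t i j => x t i j - f i j (w1 t i) (w2 t i) with hφv
  set P1 : ℝ → Fin N → Fin n → ℝ := fun t i j => pw1 (f i j) (w1 t i) (w2 t i) with hP1
  set P2 : ℝ → Fin N → Fin n → ℝ := fun t i j => pw2 (f i j) (w1 t i) (w2 t i) with hP2
  set C1 : ℝ → Fin N → ℝ := fun t i => -(Lm *ᵥ tw1 t) i with hC1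
  set C2 : ℝ → Fin N → ℝ := fun t i => -(Lm *ᵥ tw2 t) i with hC2
  set Sv1 : ℝ → Fin N → ℝ := fun t i => ∑ l, k i l * φv t i l * P1 t i l with hSv1
  set Sv2 : ℝ → Fin N → ℝ := fun t i => ∑ l, k i l * φv t i l * P2 t i l with hSv2
  set U1 : ℝ → Fin N → ℝ := fun t i => Sv1 t i + kc1 * C1 t i with hU1
  set U2 : ℝ → Fin N → ℝ := fun t i => Sv2 t i + kc2 * C2 t i with hU2
  set DW1 : ℝ → Fin N → ℝ := fun t i => (-1:ℝ)^n * v2 + U1 t i with hDW1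
  set DW2 : ℝ → Fin N → ℝ := fun t i => (-1:ℝ)^(n+1) * v1 + U2 t i with hDW2
  set Dφ : ℝ → Fin N → Fin n → ℝ := fun t i j =>
    -(k i j) * φv t i j - P1 t i j * U1 t i - P2 t i j * U2 t i with hDφ
  set DP1 : ℝ → Fin N → Fin n → ℝ := fun t i j =>
    pw1 (pw1 (f i j)) (w1 t i) (w2 t i) * DW1 t i
      + pw2 (pw1 (f i j)) (w1 t i) (w2 t i) * DW2 t i with hDP1
  set DP2 : ℝ → Fin N → Fin n → ℝ := fun t i j =>
    pw1 (pw2 (f i j)) (w1 t i) (w2 t i) * DW1 t i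
      + pw2 (pw2 (f i j)) (w1 t i) (w2 t i) * DW2 t i with hDP2
  set DC1 : ℝ → Fin N → ℝ := fun t i => -∑ m, Lm i m * DW1 t m with hDC1
  set DC2 : ℝ → Fin N → ℝ := fun t i => -∑ m, Lm i m * DW2 t m with hDC2
  set DS1 : ℝ → Fin N → ℝ := fun t i =>
    ∑ l, (k i l * Dφ t i l * P1 t i l + k i l * φv t i l * DP1 t i l) with hDS1
  set DS2 : ℝ → Fin N → ℝ := fun t i =>
    ∑ l, (k i l * Dφ t i l * P2 t i l + k i l * φv t i l * DP2 t i l) with hDS2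
  set DU1 : ℝ → Fin N → ℝ := fun t i => DS1 t i + kc1 * DC1 t i with hDU1
  set DU2 : ℝ → Fin N → ℝ := fun t i => DS2 t i + kc2 * DC2 t i with hDU2
  set Wf : ℝ → ℝ := fun t => ∑ i, ((∑ j, (k i j * φv t i j) * (k i j * φv t i j))
    + (U1 t i * U1 t i + U2 t i * U2 t i)) with hWf
  set DWf : ℝ → ℝ := fun t => ∑ i,
    ((∑ j, ((k i j * Dφ t i j) * (k i j * φv t i j)
        + (k i j * φv t i j) * (k i j * Dφ t i j)))
      + ((DU1 t i * U1 t i + U1 t i * DU1 t i) + (DU2 t i * U2 t i + U2 t i * DU2 t i))) with hDWf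
  set Vf : ℝ → ℝ := fun t => (∑ i, ∑ j, k i j / 2 * (φv t i j * φv t i j))
    + (kc1/2 * (∑ i, ∑ m, Lm i m * (tw1 t i * tw1 t m))
      + kc2/2 * (∑ i, ∑ m, Lm i m * (tw2 t i * tw2 t m))) with hVf
  set DVf : ℝ → ℝ := fun t => (∑ i, ∑ j, k i j / 2 * (Dφ t i j * φv t i j + φv t i j * Dφ t i j))
    + (kc1/2 * (∑ i, ∑ m, Lm i m * (DW1 t i * tw1 t m + tw1 t i * DW1 t m))
      + kc2/2 * (∑ i, ∑ m, Lm i m * (DW2 t i * tw2 t m + tw2 t i * DW2 t m))) with hDVf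
  have hC1sum : ∀ t i, C1 t i = -∑ m, Lm i m * tw1 t m := fun t i => rfl
  have hC2sum : ∀ t i, C2 t i = -∑ m, Lm i m * tw2 t m := fun t i => rfl
  -- derivatives
  have hw1d : ∀ (i : Fin N) (t : ℝ), 0 ≤ t → HasDerivAt (fun s => w1 s i) (DW1 t i) t := by
    intro i t ht
    have h := hode_w1 i t ht
    convert h using 1
    simp only [hDW1, hU1, hSv1, hC1, hφv, hP1, htw1]
    ring
  have hw2d : ∀ (i : Fin N) (t : ℝ), 0 ≤ t → HasDerivAt (fun s => w2 s i) (DW2 t i) t := by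
    intro i t ht
    have h := hode_w2 i t ht
    convert h using 1
    simp only [hDW2, hU2, hSv2, hC2, hφv, hP2, htw2]
    ring
  have hφd : ∀ (i : Fin N) (j : Fin n) (t : ℝ), 0 ≤ t →
      HasDerivAt (fun s => φv s i j) (Dφ t i j) t := by
    intro i j t ht
    have hfd : HasDerivAt (fun s => f i j (w1 s i) (w2 s i))
        (pw1 (f i j) (w1 t i) (w2 t i) * DW1 t i
          + pw2 (f i j) (w1 t i) (w2 t i) * DW2 t i) t :=
      MCS.hasDerivAt_pw (f i j) ((hf i j).differentiable (by norm_num))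
        (hw1d i t ht) (hw2d i t ht)
    have h := (hode_x i j t ht).sub hfd
    refine h.congr_deriv ?_
    simp only [hDφ, hφv, hP1, hP2, hDW1, hDW2]
    have hpow : (-1:ℝ)^(n+1) = -((-1:ℝ)^n) := by rw [pow_succ]; ring
    rw [hpow]; ring
  have hP1d : ∀ (i : Fin N) (j : Fin n) (t : ℝ), 0 ≤ t →
      HasDerivAt (fun s => P1 s i j) (DP1 t i j) t := by
    intro i j t ht
    exact MCS.hasDerivAt_pw (pw1 (f i j)) (MCS.differentiable_pw1 (f i j) (hf i j))
      (hw1d i t ht) (hw2d i t ht)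
  have hP2d : ∀ (i : Fin N) (j : Fin n) (t : ℝ), 0 ≤ t →
      HasDerivAt (fun s => P2 s i j) (DP2 t i j) t := by
    intro i j t ht
    exact MCS.hasDerivAt_pw (pw2 (f i j)) (MCS.differentiable_pw2 (f i j) (hf i j))
      (hw1d i t ht) (hw2d i t ht)
  have hC1d : ∀ (i : Fin N) (t : ℝ), 0 ≤ t → HasDerivAt (fun s => C1 s i) (DC1 t i) t := by
    intro i t ht
    have h : HasDerivAt (fun s => -∑ m, Lm i m * (w1 s m - w1star m))
        (-∑ m, Lm i m * DW1 t m) t :=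
      (HasDerivAt.fun_sum (fun m _ =>
        ((hw1d m t ht).sub_const (w1star m)).const_mul (Lm i m))).neg
    exact h
  have hC2d : ∀ (i : Fin N) (t : ℝ), 0 ≤ t → HasDerivAt (fun s => C2 s i) (DC2 t i) t := by
    intro i t ht
    have h : HasDerivAt (fun s => -∑ m, Lm i m * (w2 s m - w2star m))
        (-∑ m, Lm i m * DW2 t m) t :=
      (HasDerivAt.fun_sum (fun m _ =>
        ((hw2d m t ht).sub_const (w2star m)).const_mul (Lm i m))).neg
    exact h
  have hS1d : ∀ (i : Fin N) (t : ℝ), 0 ≤ t → HasDerivAt (fun s => Sv1 s i) (DS1 t i) t := by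
    intro i t ht
    exact HasDerivAt.fun_sum fun l _ => ((hφd i l t ht).const_mul (k i l)).mul (hP1d i l t ht)
  have hS2d : ∀ (i : Fin N) (t : ℝ), 0 ≤ t → HasDerivAt (fun s => Sv2 s i) (DS2 t i) t := by
    intro i t ht
    exact HasDerivAt.fun_sum fun l _ => ((hφd i l t ht).const_mul (k i l)).mul (hP2d i l t ht)
  have hU1d : ∀ (i : Fin N) (t : ℝ), 0 ≤ t → HasDerivAt (fun s => U1 s i) (DU1 t i) t :=
    fun i t ht => (hS1d i t ht).add ((hC1d i t ht).const_mul kc1)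
  have hU2d : ∀ (i : Fin N) (t : ℝ), 0 ≤ t → HasDerivAt (fun s => U2 s i) (DU2 t i) t :=
    fun i t ht => (hS2d i t ht).add ((hC2d i t ht).const_mul kc2)
  have hWd : ∀ t : ℝ, 0 ≤ t → HasDerivAt Wf (DWf t) t := by
    intro t ht
    exact HasDerivAt.fun_sum fun i _ =>
      (HasDerivAt.fun_sum fun j _ =>
        ((hφd i j t ht).const_mul (k i j)).mul ((hφd i j t ht).const_mul (k i j))).add
      ((((hU1d i t ht).mul (hU1d i t ht))).add (((hU2d i t ht).mul (hU2d i t ht))))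
  have hVd : ∀ t : ℝ, 0 ≤ t → HasDerivAt Vf (DVf t) t := by
    intro t ht
    exact (HasDerivAt.fun_sum fun i _ => HasDerivAt.fun_sum fun j _ =>
        ((hφd i j t ht).mul (hφd i j t ht)).const_mul (k i j / 2)).add
      (((HasDerivAt.fun_sum fun i _ => HasDerivAt.fun_sum fun m _ =>
          ((((hw1d i t ht).sub_const (w1star i)).mul
            ((hw1d m t ht).sub_const (w1star m))).const_mul (Lm i m))).const_mul (kc1/2)).add
       ((HasDerivAt.fun_sum fun i _ => HasDerivAt.fun_sum fun m _ =>
          ((((hw2d i t ht).sub_const (w2star i)).mul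
            ((hw2d m t ht).sub_const (w2star m))).const_mul (Lm i m))).const_mul (kc2/2)))
    -- V' = -W
  have hVW : ∀ t : ℝ, DVf t = -(Wf t) := by
    intro t
    have partA : (∑ i, ∑ j, k i j / 2 * (Dφ t i j * φv t i j + φv t i j * Dφ t i j))
        = ∑ i, (-(∑ j, (k i j * φv t i j) * (k i j * φv t i j))
            - (Sv1 t i * U1 t i + Sv2 t i * U2 t i)) := by
      refine Finset.sum_congr rfl fun i _ => ?_
      have h1 : ∀ j : Fin n, k i j / 2 * (Dφ t i j * φv t i j + φv t i j * Dφ t i j)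
          = -((k i j * φv t i j) * (k i j * φv t i j))
            - ((k i j * φv t i j * P1 t i j) * U1 t i
              + (k i j * φv t i j * P2 t i j) * U2 t i) := by
        intro j; simp only [hDφ]; ring
      rw [Finset.sum_congr rfl fun j _ => h1 j, Finset.sum_sub_distrib,
        Finset.sum_neg_distrib, Finset.sum_add_distrib, ← Finset.sum_mul, ← Finset.sum_mul]
    have hzero1 : (∑ i, ∑ m, Lm i m * tw1 t m) = 0 := by
      rw [Finset.sum_comm]
      refine Finset.sum_eq_zero fun m _ => ?_
      rw [← Finset.sum_mul, hcol m, zero_mul]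
    have hzero2 : (∑ i, ∑ m, Lm i m * tw2 t m) = 0 := by
      rw [Finset.sum_comm]
      refine Finset.sum_eq_zero fun m _ => ?_
      rw [← Finset.sum_mul, hcol m, zero_mul]
    have hsplit1 : (∑ i, ∑ m, Lm i m * (DW1 t i * tw1 t m + tw1 t i * DW1 t m))
        = 2 * ∑ i, DW1 t i * ∑ m, Lm i m * tw1 t m := by
      have e1 : ∀ i : Fin N, ∑ m, Lm i m * (DW1 t i * tw1 t m + tw1 t i * DW1 t m)
          = (∑ m, Lm i m * (DW1 t i * tw1 t m)) + ∑ m, Lm i m * (tw1 t i * DW1 t m) := by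
        intro i
        rw [← Finset.sum_add_distrib]
        exact Finset.sum_congr rfl fun m _ => by ring
      rw [Finset.sum_congr rfl fun i _ => e1 i, Finset.sum_add_distrib]
      have e2 : (∑ i, ∑ m, Lm i m * (tw1 t i * DW1 t m))
          = ∑ i, ∑ m, Lm i m * (DW1 t i * tw1 t m) := by
        rw [Finset.sum_comm]
        refine Finset.sum_congr rfl fun i _ => Finset.sum_congr rfl fun m _ => ?_
        rw [hsymm m i]; ring
      have e3 : ∀ i : Fin N, (∑ m, Lm i m * (DW1 t i * tw1 t m))
          = DW1 t i * ∑ m, Lm i m * tw1 t m := by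
        intro i
        rw [Finset.mul_sum]
        exact Finset.sum_congr rfl fun m _ => by ring
      rw [e2, Finset.sum_congr rfl fun i _ => e3 i]
      ring
    have hsplit2 : (∑ i, ∑ m, Lm i m * (DW2 t i * tw2 t m + tw2 t i * DW2 t m))
        = 2 * ∑ i, DW2 t i * ∑ m, Lm i m * tw2 t m := by
      have e1 : ∀ i : Fin N, ∑ m, Lm i m * (DW2 t i * tw2 t m + tw2 t i * DW2 t m)
          = (∑ m, Lm i m * (DW2 t i * tw2 t m)) + ∑ m, Lm i m * (tw2 t i * DW2 t m) := by
        intro i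
        rw [← Finset.sum_add_distrib]
        exact Finset.sum_congr rfl fun m _ => by ring
      rw [Finset.sum_congr rfl fun i _ => e1 i, Finset.sum_add_distrib]
      have e2 : (∑ i, ∑ m, Lm i m * (tw2 t i * DW2 t m))
          = ∑ i, ∑ m, Lm i m * (DW2 t i * tw2 t m) := by
        rw [Finset.sum_comm]
        refine Finset.sum_congr rfl fun i _ => Finset.sum_congr rfl fun m _ => ?_
        rw [hsymm m i]; ring
      have e3 : ∀ i : Fin N, (∑ m, Lm i m * (DW2 t i * tw2 t m))
          = DW2 t i * ∑ m, Lm i m * tw2 t m := by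
        intro i
        rw [Finset.mul_sum]
        exact Finset.sum_congr rfl fun m _ => by ring
      rw [e2, Finset.sum_congr rfl fun i _ => e3 i]
      ring
    have e4 : (∑ i, DW1 t i * ∑ m, Lm i m * tw1 t m)
        = ((-1:ℝ)^n * v2) * (∑ i, ∑ m, Lm i m * tw1 t m)
          + ∑ i, U1 t i * ∑ m, Lm i m * tw1 t m := by
      rw [Finset.mul_sum, ← Finset.sum_add_distrib]
      refine Finset.sum_congr rfl fun i _ => ?_
      simp only [hDW1]; ring
    have e5 : (∑ i, DW2 t i * ∑ m, Lm i m * tw2 t m)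
        = ((-1:ℝ)^(n+1) * v1) * (∑ i, ∑ m, Lm i m * tw2 t m)
          + ∑ i, U2 t i * ∑ m, Lm i m * tw2 t m := by
      rw [Finset.mul_sum, ← Finset.sum_add_distrib]
      refine Finset.sum_congr rfl fun i _ => ?_
      simp only [hDW2]; ring
    have partB1 : kc1/2 * (∑ i, ∑ m, Lm i m * (DW1 t i * tw1 t m + tw1 t i * DW1 t m))
        = ∑ i, -(U1 t i * (kc1 * C1 t i)) := by
      rw [hsplit1, e4, hzero1, mul_zero, zero_add]
      rw [Finset.mul_sum, Finset.mul_sum]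
      refine Finset.sum_congr rfl fun i _ => ?_
      rw [hC1sum t i]; ring
    have partB2 : kc2/2 * (∑ i, ∑ m, Lm i m * (DW2 t i * tw2 t m + tw2 t i * DW2 t m))
        = ∑ i, -(U2 t i * (kc2 * C2 t i)) := by
      rw [hsplit2, e5, hzero2, mul_zero, zero_add]
      rw [Finset.mul_sum, Finset.mul_sum]
      refine Finset.sum_congr rfl fun i _ => ?_
      rw [hC2sum t i]; ring
    show (∑ i, ∑ j, k i j / 2 * (Dφ t i j * φv t i j + φv t i j * Dφ t i j))
      + (kc1/2 * (∑ i, ∑ m, Lm i m * (DW1 t i * tw1 t m + tw1 t i * DW1 t m))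
        + kc2/2 * (∑ i, ∑ m, Lm i m * (DW2 t i * tw2 t m + tw2 t i * DW2 t m))) = -(Wf t)
    rw [partA, partB1, partB2, ← Finset.sum_add_distrib, ← Finset.sum_add_distrib]
    rw [show -(Wf t) = ∑ i, -(((∑ j, (k i j * φv t i j) * (k i j * φv t i j))
      + (U1 t i * U1 t i + U2 t i * U2 t i))) from (Finset.sum_neg_distrib _).symm]
    refine Finset.sum_congr rfl fun i _ => ?_
    simp only [hU1, hU2]
    ring
    -- nonnegativity
  have hWinn : ∀ (t : ℝ) (i : Fin N), 0 ≤ (∑ j, (k i j * φv t i j) * (k i j * φv t i j))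
      + (U1 t i * U1 t i + U2 t i * U2 t i) := by
    intro t i
    have h1 : 0 ≤ ∑ j, (k i j * φv t i j) * (k i j * φv t i j) :=
      Finset.sum_nonneg fun j _ => mul_self_nonneg _
    nlinarith [mul_self_nonneg (U1 t i), mul_self_nonneg (U2 t i)]
  have hWnn : ∀ t : ℝ, 0 ≤ Wf t := fun t => Finset.sum_nonneg fun i _ => hWinn t i
  have hQnn1 : ∀ t : ℝ, 0 ≤ ∑ i, ∑ m, Lm i m * (tw1 t i * tw1 t m) := by
    intro t; rw [hQD (tw1 t)]; exact Finset.sum_nonneg fun e _ => sq_nonneg _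
  have hQnn2 : ∀ t : ℝ, 0 ≤ ∑ i, ∑ m, Lm i m * (tw2 t i * tw2 t m) := by
    intro t; rw [hQD (tw2 t)]; exact Finset.sum_nonneg fun e _ => sq_nonneg _
  have hAnn : ∀ t : ℝ, 0 ≤ ∑ i, ∑ j, k i j / 2 * (φv t i j * φv t i j) :=
    fun t => Finset.sum_nonneg fun i _ => Finset.sum_nonneg fun j _ =>
      mul_nonneg (by linarith [hk i j]) (mul_self_nonneg _)
  have hVparts : ∀ t : ℝ, Vf t = (∑ i, ∑ j, k i j / 2 * (φv t i j * φv t i j))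
      + (kc1/2 * (∑ i, ∑ m, Lm i m * (tw1 t i * tw1 t m))
        + kc2/2 * (∑ i, ∑ m, Lm i m * (tw2 t i * tw2 t m))) := fun t => rfl
  have hVnn : ∀ t : ℝ, 0 ≤ Vf t := by
    intro t
    rw [hVparts t]
    have m1 : 0 ≤ kc1/2 * (∑ i, ∑ m, Lm i m * (tw1 t i * tw1 t m)) :=
      mul_nonneg (by linarith) (hQnn1 t)
    have m2 : 0 ≤ kc2/2 * (∑ i, ∑ m, Lm i m * (tw2 t i * tw2 t m)) :=
      mul_nonneg (by linarith) (hQnn2 t)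
    linarith [hAnn t]
  have hVanti : AntitoneOn Vf (Set.Ici (0:ℝ)) := by
    apply antitoneOn_of_deriv_nonpos (convex_Ici 0)
    · exact fun t ht => (hVd t ht).continuousAt.continuousWithinAt
    · intro t ht
      rw [interior_Ici] at ht
      exact (hVd t ht.le).differentiableAt.differentiableWithinAt
    · intro t ht
      rw [interior_Ici] at ht
      rw [(hVd t ht.le).deriv, hVW t]
      exact neg_nonpos.2 (hWnn t)
  have hVle : ∀ t : ℝ, 0 ≤ t → Vf t ≤ Vf 0 :=
    fun t ht => hVanti Set.self_mem_Ici ht ht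
  -- bound on φ
  have hφbd : ∀ (i : Fin N) (j : Fin n), MCS.BddOn (fun t => φv t i j) := by
    intro i j
    refine MCS.BddOn.of_le (M := Real.sqrt (2 * Vf 0 / k i j)) fun t ht => ?_
    have e1 : ∀ (i' : Fin N) (j' : Fin n), 0 ≤ k i' j' / 2 * (φv t i' j' * φv t i' j') :=
      fun i' j' => mul_nonneg (by linarith [hk i' j']) (mul_self_nonneg _)
    have h1a : k i j / 2 * (φv t i j * φv t i j)
        ≤ ∑ j', k i j' / 2 * (φv t i j' * φv t i j') :=
      Finset.single_le_sum (fun j' _ => e1 i j') (Finset.mem_univ j)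
    have h1b : (∑ j', k i j' / 2 * (φv t i j' * φv t i j'))
        ≤ ∑ i', ∑ j', k i' j' / 2 * (φv t i' j' * φv t i' j') :=
      Finset.single_le_sum (fun i' _ => Finset.sum_nonneg fun j' _ => e1 i' j')
        (Finset.mem_univ i)
    have h1 : k i j / 2 * (φv t i j * φv t i j)
        ≤ ∑ i', ∑ j', k i' j' / 2 * (φv t i' j' * φv t i' j') := le_trans h1a h1b
    have h1' : k i j / 2 * (φv t i j * φv t i j) ≤ Vf 0 := by
      have := hVle t ht
      rw [hVparts t] at this
      have m1 : 0 ≤ kc1/2 * (∑ i, ∑ m, Lm i m * (tw1 t i * tw1 t m)) :=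
        mul_nonneg (by linarith) (hQnn1 t)
      have m2 : 0 ≤ kc2/2 * (∑ i, ∑ m, Lm i m * (tw2 t i * tw2 t m)) :=
        mul_nonneg (by linarith) (hQnn2 t)
      linarith
    have h2 : φv t i j * φv t i j ≤ 2 * Vf 0 / k i j := by
      rw [le_div_iff₀ (hk i j)]
      calc φv t i j * φv t i j * k i j = 2 * (k i j / 2 * (φv t i j * φv t i j)) := by ring
        _ ≤ 2 * Vf 0 := mul_le_mul_of_nonneg_left h1' (by norm_num)
    calc |φv t i j| = Real.sqrt (φv t i j * φv t i j) := (Real.sqrt_mul_self_eq_abs _).symm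
      _ ≤ _ := Real.sqrt_le_sqrt h2
  -- bounds on the consensus errors
  have hDtw1bd : ∀ (t : ℝ), 0 ≤ t → ∀ e,
      |(D.transpose *ᵥ tw1 t) e| ≤ Real.sqrt (2 * Vf 0 / kc1) := by
    intro t ht e
    have h1 : kc1/2 * (∑ i, ∑ m, Lm i m * (tw1 t i * tw1 t m)) ≤ Vf 0 := by
      have := hVle t ht
      rw [hVparts t] at this
      have m2 : 0 ≤ kc2/2 * (∑ i, ∑ m, Lm i m * (tw2 t i * tw2 t m)) :=
        mul_nonneg (by linarith) (hQnn2 t)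
      linarith [hAnn t]
    rw [hQD (tw1 t)] at h1
    have h2 : ((D.transpose *ᵥ tw1 t) e)^2 ≤ ∑ e', ((D.transpose *ᵥ tw1 t) e')^2 :=
      Finset.single_le_sum (f := fun e' => ((D.transpose *ᵥ tw1 t) e')^2)
        (fun _ _ => sq_nonneg _) (Finset.mem_univ e)
    have h3 : ((D.transpose *ᵥ tw1 t) e)^2 ≤ 2 * Vf 0 / kc1 := by
      rw [le_div_iff₀ hkc1]
      calc ((D.transpose *ᵥ tw1 t) e)^2 * kc1
          = 2 * (kc1/2 * ((D.transpose *ᵥ tw1 t) e)^2) := by ring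
        _ ≤ 2 * (kc1/2 * ∑ e', ((D.transpose *ᵥ tw1 t) e')^2) := by
            have := mul_le_mul_of_nonneg_left h2 (le_of_lt (half_pos hkc1))
            linarith [this]
        _ ≤ 2 * Vf 0 := mul_le_mul_of_nonneg_left h1 (by norm_num)
    calc |(D.transpose *ᵥ tw1 t) e| = Real.sqrt (((D.transpose *ᵥ tw1 t) e)^2) :=
          (Real.sqrt_sq_eq_abs _).symm
      _ ≤ _ := Real.sqrt_le_sqrt h3
  have hDtw2bd : ∀ (t : ℝ), 0 ≤ t → ∀ e,
      |(D.transpose *ᵥ tw2 t) e| ≤ Real.sqrt (2 * Vf 0 / kc2) := by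
    intro t ht e
    have h1 : kc2/2 * (∑ i, ∑ m, Lm i m * (tw2 t i * tw2 t m)) ≤ Vf 0 := by
      have := hVle t ht
      rw [hVparts t] at this
      have m1 : 0 ≤ kc1/2 * (∑ i, ∑ m, Lm i m * (tw1 t i * tw1 t m)) :=
        mul_nonneg (by linarith) (hQnn1 t)
      linarith [hAnn t]
    rw [hQD (tw2 t)] at h1
    have h2 : ((D.transpose *ᵥ tw2 t) e)^2 ≤ ∑ e', ((D.transpose *ᵥ tw2 t) e')^2 :=
      Finset.single_le_sum (f := fun e' => ((D.transpose *ᵥ tw2 t) e')^2)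
        (fun _ _ => sq_nonneg _) (Finset.mem_univ e)
    have h3 : ((D.transpose *ᵥ tw2 t) e)^2 ≤ 2 * Vf 0 / kc2 := by
      rw [le_div_iff₀ hkc2]
      calc ((D.transpose *ᵥ tw2 t) e)^2 * kc2
          = 2 * (kc2/2 * ((D.transpose *ᵥ tw2 t) e)^2) := by ring
        _ ≤ 2 * (kc2/2 * ∑ e', ((D.transpose *ᵥ tw2 t) e')^2) := by
            have := mul_le_mul_of_nonneg_left h2 (le_of_lt (half_pos hkc2))
            linarith [this]
        _ ≤ 2 * Vf 0 := mul_le_mul_of_nonneg_left h1 (by norm_num)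
    calc |(D.transpose *ᵥ tw2 t) e| = Real.sqrt (((D.transpose *ᵥ tw2 t) e)^2) :=
          (Real.sqrt_sq_eq_abs _).symm
      _ ≤ _ := Real.sqrt_le_sqrt h3
  have hmulVecD : ∀ (u : ℝ → Fin N → ℝ) (t : ℝ) (i : Fin N),
      (Lm *ᵥ u t) i = ∑ e, D i e * (D.transpose *ᵥ u t) e := by
    intro u t i
    rw [hD, ← Matrix.mulVec_mulVec]
    rfl
  have hC1bd : ∀ i : Fin N, MCS.BddOn (fun t => C1 t i) := by
    intro i
    refine MCS.BddOn.of_le (M := ∑ e, |D i e| * Real.sqrt (2 * Vf 0 / kc1)) fun t ht => ?_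
    have h0 : C1 t i = -∑ e, D i e * (D.transpose *ᵥ tw1 t) e := by
      simp only [hC1]; rw [hmulVecD tw1 t i]
    rw [h0, abs_neg]
    calc |∑ e, D i e * (D.transpose *ᵥ tw1 t) e| ≤ ∑ e, |D i e * (D.transpose *ᵥ tw1 t) e| :=
          Finset.abs_sum_le_sum_abs _ _
      _ ≤ ∑ e, |D i e| * Real.sqrt (2 * Vf 0 / kc1) := by
          refine Finset.sum_le_sum fun e _ => ?_
          rw [abs_mul]
          exact mul_le_mul_of_nonneg_left (hDtw1bd t ht e) (abs_nonneg _)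
  have hC2bd : ∀ i : Fin N, MCS.BddOn (fun t => C2 t i) := by
    intro i
    refine MCS.BddOn.of_le (M := ∑ e, |D i e| * Real.sqrt (2 * Vf 0 / kc2)) fun t ht => ?_
    have h0 : C2 t i = -∑ e, D i e * (D.transpose *ᵥ tw2 t) e := by
      simp only [hC2]; rw [hmulVecD tw2 t i]
    rw [h0, abs_neg]
    calc |∑ e, D i e * (D.transpose *ᵥ tw2 t) e| ≤ ∑ e, |D i e * (D.transpose *ᵥ tw2 t) e| :=
          Finset.abs_sum_le_sum_abs _ _
      _ ≤ ∑ e, |D i e| * Real.sqrt (2 * Vf 0 / kc2) := by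
          refine Finset.sum_le_sum fun e _ => ?_
          rw [abs_mul]
          exact mul_le_mul_of_nonneg_left (hDtw2bd t ht e) (abs_nonneg _)
    -- boundedness chain
  choose Cb hCb using hbound
  have hP1bd : ∀ i j, MCS.BddOn (fun t => P1 t i j) := fun i j =>
    MCS.BddOn.of_le (M := Cb i j) fun t _ => (hCb i j (w1 t i) (w2 t i)).1
  have hP2bd : ∀ i j, MCS.BddOn (fun t => P2 t i j) := fun i j =>
    MCS.BddOn.of_le (M := Cb i j) fun t _ => (hCb i j (w1 t i) (w2 t i)).2.1
  have hpp11bd : ∀ i j, MCS.BddOn (fun t => pw1 (pw1 (f i j)) (w1 t i) (w2 t i)) := fun i j =>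
    MCS.BddOn.of_le (M := Cb i j) fun t _ => (hCb i j (w1 t i) (w2 t i)).2.2.1
  have hpp21bd : ∀ i j, MCS.BddOn (fun t => pw2 (pw1 (f i j)) (w1 t i) (w2 t i)) := fun i j =>
    MCS.BddOn.of_le (M := Cb i j) fun t _ => (hCb i j (w1 t i) (w2 t i)).2.2.2.1
  have hpp12bd : ∀ i j, MCS.BddOn (fun t => pw1 (pw2 (f i j)) (w1 t i) (w2 t i)) := fun i j =>
    MCS.BddOn.of_le (M := Cb i j) fun t _ => (hCb i j (w1 t i) (w2 t i)).2.2.2.2.1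
  have hpp22bd : ∀ i j, MCS.BddOn (fun t => pw2 (pw2 (f i j)) (w1 t i) (w2 t i)) := fun i j =>
    MCS.BddOn.of_le (M := Cb i j) fun t _ => (hCb i j (w1 t i) (w2 t i)).2.2.2.2.2
  have hSv1bd : ∀ i, MCS.BddOn (fun t => Sv1 t i) := by
    intro i
    have h : MCS.BddOn (fun t => ∑ l, k i l * φv t i l * P1 t i l) :=
      MCS.BddOn.sum Finset.univ _ (fun l _ =>
        ((MCS.BddOn.const (k i l)).mul (hφbd i l)).mul (hP1bd i l))
    exact h
  have hSv2bd : ∀ i, MCS.BddOn (fun t => Sv2 t i) := by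
    intro i
    have h : MCS.BddOn (fun t => ∑ l, k i l * φv t i l * P2 t i l) :=
      MCS.BddOn.sum Finset.univ _ (fun l _ =>
        ((MCS.BddOn.const (k i l)).mul (hφbd i l)).mul (hP2bd i l))
    exact h
  have hU1bd : ∀ i, MCS.BddOn (fun t => U1 t i) := fun i =>
    (hSv1bd i).add ((hC1bd i).const_mul kc1)
  have hU2bd : ∀ i, MCS.BddOn (fun t => U2 t i) := fun i =>
    (hSv2bd i).add ((hC2bd i).const_mul kc2)
  have hDW1bd : ∀ i, MCS.BddOn (fun t => DW1 t i) := fun i =>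
    (MCS.BddOn.const _).add (hU1bd i)
  have hDW2bd : ∀ i, MCS.BddOn (fun t => DW2 t i) := fun i =>
    (MCS.BddOn.const _).add (hU2bd i)
  have hDφbd : ∀ i j, MCS.BddOn (fun t => Dφ t i j) := fun i j =>
    (((MCS.BddOn.const (-(k i j))).mul (hφbd i j)).sub ((hP1bd i j).mul (hU1bd i))).sub
      ((hP2bd i j).mul (hU2bd i))
  have hDP1bd : ∀ i j, MCS.BddOn (fun t => DP1 t i j) := fun i j =>
    ((hpp11bd i j).mul (hDW1bd i)).add ((hpp21bd i j).mul (hDW2bd i))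
  have hDP2bd : ∀ i j, MCS.BddOn (fun t => DP2 t i j) := fun i j =>
    ((hpp12bd i j).mul (hDW1bd i)).add ((hpp22bd i j).mul (hDW2bd i))
  have hDC1bd : ∀ i, MCS.BddOn (fun t => DC1 t i) := by
    intro i
    have h : MCS.BddOn (fun t => -∑ m, Lm i m * DW1 t m) :=
      (MCS.BddOn.sum Finset.univ _ (fun m _ =>
        (MCS.BddOn.const (Lm i m)).mul (hDW1bd m))).neg
    exact h
  have hDC2bd : ∀ i, MCS.BddOn (fun t => DC2 t i) := by
    intro i
    have h : MCS.BddOn (fun t => -∑ m, Lm i m * DW2 t m) :=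
      (MCS.BddOn.sum Finset.univ _ (fun m _ =>
        (MCS.BddOn.const (Lm i m)).mul (hDW2bd m))).neg
    exact h
  have hDS1bd : ∀ i, MCS.BddOn (fun t => DS1 t i) := by
    intro i
    have h : MCS.BddOn (fun t =>
        ∑ l, (k i l * Dφ t i l * P1 t i l + k i l * φv t i l * DP1 t i l)) :=
      MCS.BddOn.sum Finset.univ _ (fun l _ =>
        (((MCS.BddOn.const (k i l)).mul (hDφbd i l)).mul (hP1bd i l)).add
        (((MCS.BddOn.const (k i l)).mul (hφbd i l)).mul (hDP1bd i l)))
    exact h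
  have hDS2bd : ∀ i, MCS.BddOn (fun t => DS2 t i) := by
    intro i
    have h : MCS.BddOn (fun t =>
        ∑ l, (k i l * Dφ t i l * P2 t i l + k i l * φv t i l * DP2 t i l)) :=
      MCS.BddOn.sum Finset.univ _ (fun l _ =>
        (((MCS.BddOn.const (k i l)).mul (hDφbd i l)).mul (hP2bd i l)).add
        (((MCS.BddOn.const (k i l)).mul (hφbd i l)).mul (hDP2bd i l)))
    exact h
  have hDU1bd : ∀ i, MCS.BddOn (fun t => DU1 t i) := fun i =>
    (hDS1bd i).add ((hDC1bd i).const_mul kc1)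
  have hDU2bd : ∀ i, MCS.BddOn (fun t => DU2 t i) := fun i =>
    (hDS2bd i).add ((hDC2bd i).const_mul kc2)
  have hDWfbd : MCS.BddOn DWf := by
    have h : MCS.BddOn (fun t => ∑ i,
        ((∑ j, ((k i j * Dφ t i j) * (k i j * φv t i j)
            + (k i j * φv t i j) * (k i j * Dφ t i j)))
          + ((DU1 t i * U1 t i + U1 t i * DU1 t i)
            + (DU2 t i * U2 t i + U2 t i * DU2 t i)))) :=
      MCS.BddOn.sum Finset.univ _ (fun i _ =>
        (MCS.BddOn.sum Finset.univ _ (fun j _ =>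
          ((((MCS.BddOn.const (k i j)).mul (hDφbd i j)).mul
            ((MCS.BddOn.const (k i j)).mul (hφbd i j))).add
          (((MCS.BddOn.const (k i j)).mul (hφbd i j)).mul
            ((MCS.BddOn.const (k i j)).mul (hDφbd i j)))))).add
        ((((hDU1bd i).mul (hU1bd i)).add ((hU1bd i).mul (hDU1bd i))).add
         (((hDU2bd i).mul (hU2bd i)).add ((hU2bd i).mul (hDU2bd i)))))
    exact h
  obtain ⟨MW, hMW0, hMWb⟩ := hDWfbd
  -- Lipschitz continuity of W on [0,∞)
  have hWlip : ∀ s t : ℝ, 0 ≤ s → 0 ≤ t → |Wf t - Wf s| ≤ (MW + 1) * |t - s| := by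
    intro s t hs hti
    have h := Convex.norm_image_sub_le_of_norm_hasDerivWithin_le
      (f := Wf) (f' := DWf) (s := Set.Ici (0:ℝ)) (C := MW + 1)
      (fun u hu => (hWd u hu).hasDerivWithinAt)
      (fun u hu => by rw [Real.norm_eq_abs]; linarith [hMWb u hu])
      (convex_Ici 0) hs hti
    simpa [Real.norm_eq_abs] using h
  -- Barbalat
  have hWto0 : Tendsto Wf atTop (nhds 0) :=
    MCS.barbalat Vf Wf (MW + 1) (by linarith)
      (fun t ht => (hVW t) ▸ hVd t ht) (fun t _ => hWnn t) (fun t _ => hVnn t) hWlip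
  -- extraction of limits
  have hterm : ∀ (g : ℝ → ℝ), (∀ t, 0 ≤ t → 0 ≤ g t) → (∀ t, 0 ≤ t → g t ≤ Wf t) →
      Tendsto g atTop (nhds 0) := by
    intro g h1 h2
    refine squeeze_zero' ?_ ?_ hWto0
    · filter_upwards [eventually_ge_atTop (0:ℝ)] with t ht; exact h1 t ht
    · filter_upwards [eventually_ge_atTop (0:ℝ)] with t ht; exact h2 t ht
  have hφφ0 : ∀ i j, Tendsto (fun t => φv t i j * φv t i j) atTop (nhds 0) := by
    intro i j
    have h1 : Tendsto (fun t => (k i j * φv t i j) * (k i j * φv t i j)) atTop (nhds 0) := by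
      refine hterm _ (fun t ht => mul_self_nonneg _) (fun t ht => ?_)
      have s1 : (k i j * φv t i j) * (k i j * φv t i j)
          ≤ ∑ j', (k i j' * φv t i j') * (k i j' * φv t i j') :=
        Finset.single_le_sum (f := fun j' => (k i j' * φv t i j') * (k i j' * φv t i j'))
          (fun _ _ => mul_self_nonneg _) (Finset.mem_univ j)
      have s2 : (∑ j', (k i j' * φv t i j') * (k i j' * φv t i j'))
          + (U1 t i * U1 t i + U2 t i * U2 t i) ≤ Wf t :=
        Finset.single_le_sum (f := fun i' => (∑ j', (k i' j' * φv t i' j') * (k i' j' * φv t i' j'))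
          + (U1 t i' * U1 t i' + U2 t i' * U2 t i')) (fun i' _ => hWinn t i')
          (Finset.mem_univ i)
      nlinarith [mul_self_nonneg (U1 t i), mul_self_nonneg (U2 t i)]
    have h2 := h1.const_mul ((k i j * k i j)⁻¹)
    rw [mul_zero] at h2
    refine h2.congr fun t => ?_
    have hkne : k i j ≠ 0 := (hk i j).ne'
    field_simp
  have hφ0 : ∀ i j, Tendsto (fun t => φv t i j) atTop (nhds 0) :=
    fun i j => MCS.tendsto_zero_of_sq _ (hφφ0 i j)
  have hU10 : ∀ i, Tendsto (fun t => U1 t i) atTop (nhds 0) := by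
    intro i
    apply MCS.tendsto_zero_of_sq
    refine hterm _ (fun t ht => mul_self_nonneg _) (fun t ht => ?_)
    have s2 : (∑ j', (k i j' * φv t i j') * (k i j' * φv t i j'))
        + (U1 t i * U1 t i + U2 t i * U2 t i) ≤ Wf t :=
      Finset.single_le_sum (f := fun i' => (∑ j', (k i' j' * φv t i' j') * (k i' j' * φv t i' j'))
        + (U1 t i' * U1 t i' + U2 t i' * U2 t i')) (fun i' _ => hWinn t i')
        (Finset.mem_univ i)
    have s1 : 0 ≤ ∑ j', (k i j' * φv t i j') * (k i j' * φv t i j') :=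
      Finset.sum_nonneg fun j' _ => mul_self_nonneg _
    nlinarith [mul_self_nonneg (U2 t i)]
  have hU20 : ∀ i, Tendsto (fun t => U2 t i) atTop (nhds 0) := by
    intro i
    apply MCS.tendsto_zero_of_sq
    refine hterm _ (fun t ht => mul_self_nonneg _) (fun t ht => ?_)
    have s2 : (∑ j', (k i j' * φv t i j') * (k i j' * φv t i j'))
        + (U1 t i * U1 t i + U2 t i * U2 t i) ≤ Wf t :=
      Finset.single_le_sum (f := fun i' => (∑ j', (k i' j' * φv t i' j') * (k i' j' * φv t i' j'))
        + (U1 t i' * U1 t i' + U2 t i' * U2 t i')) (fun i' _ => hWinn t i')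
        (Finset.mem_univ i)
    have s1 : 0 ≤ ∑ j', (k i j' * φv t i j') * (k i j' * φv t i j') :=
      Finset.sum_nonneg fun j' _ => mul_self_nonneg _
    nlinarith [mul_self_nonneg (U1 t i)]
  have hSv10 : ∀ i, Tendsto (fun t => Sv1 t i) atTop (nhds 0) := by
    intro i
    have hl : ∀ l : Fin n, Tendsto (fun t => k i l * φv t i l * P1 t i l) atTop (nhds 0) := by
      intro l
      obtain ⟨M, hM0, hMb⟩ := hP1bd i l
      have hb : Tendsto (fun t => |k i l| * M * |φv t i l|) atTop (nhds 0) := by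
        have := ((hφ0 i l).abs.const_mul (|k i l| * M))
        simpa using this
      refine squeeze_zero_norm' ?_ hb
      filter_upwards [eventually_ge_atTop (0:ℝ)] with t ht
      rw [Real.norm_eq_abs, abs_mul, abs_mul]
      have h1 := hMb t ht
      have h2 : |k i l| * |φv t i l| * |P1 t i l| ≤ |k i l| * |φv t i l| * M :=
        mul_le_mul_of_nonneg_left h1 (by positivity)
      calc |k i l| * |φv t i l| * |P1 t i l| ≤ |k i l| * |φv t i l| * M := h2
        _ = |k i l| * M * |φv t i l| := by ring
    have h := tendsto_finset_sum Finset.univ (fun l (_ : l ∈ Finset.univ) => hl l)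
    have hgoal : Tendsto (fun t => ∑ l, k i l * φv t i l * P1 t i l) atTop (nhds 0) := by
      simpa using h
    exact hgoal
  have hSv20 : ∀ i, Tendsto (fun t => Sv2 t i) atTop (nhds 0) := by
    intro i
    have hl : ∀ l : Fin n, Tendsto (fun t => k i l * φv t i l * P2 t i l) atTop (nhds 0) := by
      intro l
      obtain ⟨M, hM0, hMb⟩ := hP2bd i l
      have hb : Tendsto (fun t => |k i l| * M * |φv t i l|) atTop (nhds 0) := by
        have := ((hφ0 i l).abs.const_mul (|k i l| * M))
        simpa using this
      refine squeeze_zero_norm' ?_ hb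
      filter_upwards [eventually_ge_atTop (0:ℝ)] with t ht
      rw [Real.norm_eq_abs, abs_mul, abs_mul]
      have h1 := hMb t ht
      have h2 : |k i l| * |φv t i l| * |P2 t i l| ≤ |k i l| * |φv t i l| * M :=
        mul_le_mul_of_nonneg_left h1 (by positivity)
      calc |k i l| * |φv t i l| * |P2 t i l| ≤ |k i l| * |φv t i l| * M := h2
        _ = |k i l| * M * |φv t i l| := by ring
    have h := tendsto_finset_sum Finset.univ (fun l (_ : l ∈ Finset.univ) => hl l)
    have hgoal : Tendsto (fun t => ∑ l, k i l * φv t i l * P2 t i l) atTop (nhds 0) := by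
      simpa using h
    exact hgoal
  have hC10 : ∀ i, Tendsto (fun t => C1 t i) atTop (nhds 0) := by
    intro i
    have h1 : Tendsto (fun t => U1 t i - Sv1 t i) atTop (nhds 0) := by
      simpa using (hU10 i).sub (hSv10 i)
    have h2 : Tendsto (fun t => kc1⁻¹ * (U1 t i - Sv1 t i)) atTop (nhds 0) := by
      simpa using h1.const_mul kc1⁻¹
    refine h2.congr fun t => ?_
    simp only [hU1]
    field_simp
    ring
  have hC20 : ∀ i, Tendsto (fun t => C2 t i) atTop (nhds 0) := by
    intro i
    have h1 : Tendsto (fun t => U2 t i - Sv2 t i) atTop (nhds 0) := by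
      simpa using (hU20 i).sub (hSv20 i)
    have h2 : Tendsto (fun t => kc2⁻¹ * (U2 t i - Sv2 t i)) atTop (nhds 0) := by
      simpa using h1.const_mul kc2⁻¹
    refine h2.congr fun t => ?_
    simp only [hU2]
    field_simp
    ring
  have hLw1 : Tendsto (fun t => Lm *ᵥ tw1 t) atTop (nhds 0) := by
    rw [tendsto_pi_nhds]
    intro i
    have h := (hC10 i).neg
    rw [neg_zero] at h
    have hgoal : Tendsto (fun t => (Lm *ᵥ tw1 t) i) atTop (nhds 0) := by
      refine h.congr fun t => ?_
      simp [hC1]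
    simpa using hgoal
  have hLw2 : Tendsto (fun t => Lm *ᵥ tw2 t) atTop (nhds 0) := by
    rw [tendsto_pi_nhds]
    intro i
    have h := (hC20 i).neg
    rw [neg_zero] at h
    have hgoal : Tendsto (fun t => (Lm *ᵥ tw2 t) i) atTop (nhds 0) := by
      refine h.congr fun t => ?_
      simp [hC2]
    simpa using hgoal
  have hnormL1 : Tendsto (fun t => ‖Lm *ᵥ tw1 t‖) atTop (nhds 0) := by
    simpa using hLw1.norm
  have hnormL2 : Tendsto (fun t => ‖Lm *ᵥ tw2 t‖) atTop (nhds 0) := by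
    simpa using hLw2.norm
  obtain ⟨CD, hCD0, hCDb⟩ := MCS.ker_le_bound (Matrix.mulVecLin Lm)
    (Matrix.mulVecLin D.transpose) (fun v hv => by
      rw [LinearMap.mem_ker] at hv ⊢
      rw [Matrix.mulVecLin_apply] at hv ⊢
      exact hkerD v hv)
  have hDt1 : ∀ e, Tendsto (fun t => (D.transpose *ᵥ tw1 t) e) atTop (nhds 0) := by
    intro e
    have hb : Tendsto (fun t => CD * ‖Lm *ᵥ tw1 t‖) atTop (nhds 0) := by
      simpa using hnormL1.const_mul CD
    refine squeeze_zero_norm (fun t => ?_) hb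
    calc ‖(D.transpose *ᵥ tw1 t) e‖ ≤ ‖D.transpose *ᵥ tw1 t‖ := norm_le_pi_norm _ e
      _ = ‖(Matrix.mulVecLin D.transpose) (tw1 t)‖ := by rw [Matrix.mulVecLin_apply]
      _ ≤ CD * ‖(Matrix.mulVecLin Lm) (tw1 t)‖ := hCDb (tw1 t)
      _ = CD * ‖Lm *ᵥ tw1 t‖ := by rw [Matrix.mulVecLin_apply]
  have hDt2 : ∀ e, Tendsto (fun t => (D.transpose *ᵥ tw2 t) e) atTop (nhds 0) := by
    intro e
    have hb : Tendsto (fun t => CD * ‖Lm *ᵥ tw2 t‖) atTop (nhds 0) := by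
      simpa using hnormL2.const_mul CD
    refine squeeze_zero_norm (fun t => ?_) hb
    calc ‖(D.transpose *ᵥ tw2 t) e‖ ≤ ‖D.transpose *ᵥ tw2 t‖ := norm_le_pi_norm _ e
      _ = ‖(Matrix.mulVecLin D.transpose) (tw2 t)‖ := by rw [Matrix.mulVecLin_apply]
      _ ≤ CD * ‖(Matrix.mulVecLin Lm) (tw2 t)‖ := hCDb (tw2 t)
      _ = CD * ‖Lm *ᵥ tw2 t‖ := by rw [Matrix.mulVecLin_apply]
  have hdiffC : ∀ i j : Fin N, ∃ CE : ℝ, 0 ≤ CE ∧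
      ∀ v : Fin N → ℝ, ‖v i - v j‖ ≤ CE * ‖Lm *ᵥ v‖ := by
    intro i j
    obtain ⟨CE, hCE0, hCEb⟩ := MCS.ker_le_bound (Matrix.mulVecLin Lm)
      ((LinearMap.proj i : (Fin N → ℝ) →ₗ[ℝ] ℝ) - LinearMap.proj j) (fun v hv => by
        rw [LinearMap.mem_ker] at hv ⊢
        rw [Matrix.mulVecLin_apply] at hv
        have h := hkerConst v hv i j
        simp [LinearMap.sub_apply, h])
    refine ⟨CE, hCE0, fun v => ?_⟩
    have h := hCEb v
    rw [Matrix.mulVecLin_apply] at h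
    simpa [LinearMap.sub_apply] using h
  have hdiff1 : ∀ i j : Fin N, Tendsto (fun t => tw1 t i - tw1 t j) atTop (nhds 0) := by
    intro i j
    obtain ⟨CE, hCE0, hCEb⟩ := hdiffC i j
    have hb : Tendsto (fun t => CE * ‖Lm *ᵥ tw1 t‖) atTop (nhds 0) := by
      simpa using hnormL1.const_mul CE
    exact squeeze_zero_norm (fun t => hCEb (tw1 t)) hb
  have hdiff2 : ∀ i j : Fin N, Tendsto (fun t => tw2 t i - tw2 t j) atTop (nhds 0) := by
    intro i j
    obtain ⟨CE, hCE0, hCEb⟩ := hdiffC i j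
    have hb : Tendsto (fun t => CE * ‖Lm *ᵥ tw2 t‖) atTop (nhds 0) := by
      simpa using hnormL2.const_mul CE
    exact squeeze_zero_norm (fun t => hCEb (tw2 t)) hb
  -- power identities
  have hones1 : (-1:ℝ)^n * (-1:ℝ)^n = 1 := by
    rw [← pow_add]
    exact Even.neg_one_pow ⟨n, rfl⟩
  have hones2 : (-1:ℝ)^(n+1) * (-1:ℝ)^(n+1) = 1 := by
    rw [← pow_add]
    exact Even.neg_one_pow ⟨n+1, rfl⟩
  -- final assembly
  refine ⟨?_, ?_, ?_, ?_, ?_, ?_, ?_⟩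
  · -- (1) surface convergence
    intro i
    have hsum : Tendsto (fun t => ∑ j, φv t i j * φv t i j) atTop (nhds 0) := by
      have := tendsto_finset_sum Finset.univ
        (fun j (_ : j ∈ Finset.univ) => hφφ0 i j)
      simpa using this
    have hs : Tendsto (fun t => Real.sqrt (∑ j, φv t i j * φv t i j)) atTop (nhds 0) := by
      exact (Real.continuous_sqrt.tendsto' 0 0 Real.sqrt_zero).comp hsum
    refine hs.congr fun t => ?_
    congr 1
    refine Finset.sum_congr rfl fun j _ => ?_
    simp only [hφv, sq]
  · -- (2a)
    intro e
    exact hDt1 e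
  · -- (2b)
    intro e
    exact hDt2 e
  · -- (2c)
    intro i j _
    have h := (hdiff1 i j).add_const (w1star i - w1star j)
    rw [zero_add] at h
    refine h.congr fun t => ?_
    simp only [htw1]
    ring
  · -- (2d)
    intro i j _
    have h := (hdiff2 i j).add_const (w2star i - w2star j)
    rw [zero_add] at h
    refine h.congr fun t => ?_
    simp only [htw2]
    ring
  · -- (3a)
    intro i
    rw [show wd1star = (-1:ℝ)^n * v2 + 0 by
      rw [add_zero, hv2, ← mul_assoc, hones1, one_mul]]
    refine (Tendsto.const_add _ (hU10 i)).congr fun t => ?_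
    simp only [hU1, hSv1, hC1, hφv, hP1]
    ring
  · -- (3b)
    intro i
    rw [show wd2star = (-1:ℝ)^(n+1) * v1 + 0 by
      rw [add_zero, hv1, ← mul_assoc, hones2, one_mul]]
    refine (Tendsto.const_add _ (hU20 i)).congr fun t => ?_
    simp only [hU2, hSv2, hC2, hφv, hP2]
    ring
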